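/- Let p ≥ 1, 1 ≤ k < p, λ > 0. Let U₂ ∈ ℝ^{p×k} and Û₂ ∈ ℝ^{p×k} have orthonormal columns, write Π₂ := U₂U₂ᵀ and Π̂₂ := Û₂Û₂ᵀ. Let φ_1, …, φ_n ∈ ℝ^p, ε_1, …, ε_n ∈ ℝ, β, β̂ ∈ ℝ^p, and δ ∈ ℝ^p with δ = Π₂ δ. Set r_τ := φ_τᵀ(β + δ) + ε_τ, S := λ I_k + Σ_{τ=1}^n Û₂ᵀ φ_τ φ_τᵀ Û₂, and δ̂ := Û₂ S^{-1} Σ_{τ=1}^n Û₂ᵀ φ_τ ( r_τ − φ_τᵀ β̂ ). Then ‖ δ̂ − Π̂₂ δ ‖_{λ I_p + Σ_{τ=1}^n φ_τ φ_τᵀ} ≤ ‖ Σ_{τ=1}^n Û₂ᵀ φ_τ φ_τᵀ (Π₂ − Π̂₂) δ ‖_{S^{-1}} + ‖ Σ_{τ=1}^n Û₂ᵀ φ_τ φ_τᵀ (β − β̂) ‖_{S^{-1}} + ‖ Σ_{τ=1}^n Û₂ᵀ φ_τ ε_τ ‖_{S^{-1}} + √λ · ‖δ‖₂. -/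

import Mathlib

open Matrix

/-- The weighted (semi-)norm `‖x‖_A := √(xᵀ A x)`. -/
noncomputable def wnorm {k : ℕ} (A : Matrix (Fin k) (Fin k) ℝ) (x : Fin k → ℝ) : ℝ :=
  Real.sqrt (x ⬝ᵥ A.mulVec x)

private lemma dot_self_nonneg' {m : ℕ} (x : Fin m → ℝ) : 0 ≤ x ⬝ᵥ x :=
  Finset.sum_nonneg fun i _ => mul_self_nonneg _

private lemma sqrt_dot_eq_norm {m : ℕ} (x : Fin m → ℝ) :
    Real.sqrt (x ⬝ᵥ x) = ‖(WithLp.equiv 2 (Fin m → ℝ)).symm x‖ := by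
  rw [EuclideanSpace.norm_eq]
  congr 1
  refine Finset.sum_congr rfl fun i _ => ?_
  simp [Real.norm_eq_abs, sq_abs, pow_two]

private lemma sqrt_dot_add_le {m : ℕ} (x y : Fin m → ℝ) :
    Real.sqrt ((x + y) ⬝ᵥ (x + y)) ≤ Real.sqrt (x ⬝ᵥ x) + Real.sqrt (y ⬝ᵥ y) := by
  simp only [sqrt_dot_eq_norm]
  have := norm_add_le ((WithLp.equiv 2 (Fin m → ℝ)).symm x) ((WithLp.equiv 2 (Fin m → ℝ)).symm y)
  simpa using this

private lemma dot_cauchy {m : ℕ} (x y : Fin m → ℝ) :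
    x ⬝ᵥ y ≤ Real.sqrt (x ⬝ᵥ x) * Real.sqrt (y ⬝ᵥ y) := by
  simp only [sqrt_dot_eq_norm]
  have := real_inner_le_norm ((WithLp.equiv 2 (Fin m → ℝ)).symm x)
    ((WithLp.equiv 2 (Fin m → ℝ)).symm y)
  simpa [PiLp.inner_apply, RCLike.inner_apply, dotProduct, mul_comm] using this

private lemma vecMulVec_mulVec' {m : ℕ} (u v y : Fin m → ℝ) :
    (vecMulVec u v).mulVec y = (v ⬝ᵥ y) • u := by
  ext i
  simp only [mulVec, dotProduct, vecMulVec_apply, Pi.smul_apply, smul_eq_mul, Finset.sum_mul]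
  exact Finset.sum_congr rfl fun j _ => by ring

private lemma sum_mulVec' {m k n : ℕ} (M : Fin n → Matrix (Fin m) (Fin k) ℝ) (x : Fin k → ℝ) :
    (∑ τ, M τ).mulVec x = ∑ τ, (M τ).mulVec x := by
  ext i
  simp only [mulVec, dotProduct, Finset.sum_apply, Matrix.sum_apply, Finset.sum_mul]
  exact Finset.sum_comm

private lemma dot_sum {m n : ℕ} (x : Fin m → ℝ) (f : Fin n → Fin m → ℝ) :
    x ⬝ᵥ (∑ τ, f τ) = ∑ τ, x ⬝ᵥ f τ := by
  simp only [dotProduct, Finset.sum_apply, Finset.mul_sum]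
  exact Finset.sum_comm

private lemma dot_mulVec_left {p k : ℕ} (U : Matrix (Fin p) (Fin k) ℝ) (x : Fin p → ℝ)
    (a : Fin k → ℝ) : x ⬝ᵥ U.mulVec a = Uᵀ.mulVec x ⬝ᵥ a := by
  rw [dotProduct_mulVec, mulVec_transpose]

private lemma dot_iso {p k : ℕ} (U : Matrix (Fin p) (Fin k) ℝ) (h : Uᵀ * U = 1)
    (a b : Fin k → ℝ) : U.mulVec a ⬝ᵥ U.mulVec b = a ⬝ᵥ b := by
  rw [dot_mulVec_left, mulVec_mulVec, h, one_mulVec]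

/-- quadratic form of `lam • 1 + ∑ uuᵀ` -/
private lemma quad_form {m n : ℕ} (lam : ℝ) (u : Fin n → Fin m → ℝ) (x y : Fin m → ℝ) :
    x ⬝ᵥ (lam • (1 : Matrix (Fin m) (Fin m) ℝ)
        + ∑ τ, vecMulVec (u τ) (u τ)).mulVec y
      = lam * (x ⬝ᵥ y) + ∑ τ, (x ⬝ᵥ u τ) * (u τ ⬝ᵥ y) := by
  rw [add_mulVec, dotProduct_add, smul_mulVec, one_mulVec, dotProduct_smul,
    sum_mulVec', dot_sum, smul_eq_mul]
  congr 1
  refine Finset.sum_congr rfl fun τ _ => ?_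
  rw [vecMulVec_mulVec', dotProduct_smul, smul_eq_mul, mul_comm]

open scoped MatrixOrder in
private lemma wnorm_triangle {k : ℕ} {A : Matrix (Fin k) (Fin k) ℝ} (hA : A.PosSemidef)
    (x y : Fin k → ℝ) : wnorm A (x + y) ≤ wnorm A x + wnorm A y := by
  have hsym : (CFC.sqrt A) ᵀ = CFC.sqrt A := by
    have h := (CFC.sqrt_nonneg A).posSemidef.1
    rwa [Matrix.IsHermitian, conjTranspose_eq_transpose_of_trivial] at h
  have key : ∀ z : Fin k → ℝ, z ⬝ᵥ A.mulVec z = (CFC.sqrt A).mulVec z ⬝ᵥ (CFC.sqrt A).mulVec z := by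
    intro z
    conv_lhs => rw [← CFC.sqrt_mul_sqrt_self A hA.nonneg]
    rw [← mulVec_mulVec, dot_mulVec_left, hsym]
  unfold wnorm
  rw [key (x + y), key x, key y, mulVec_add]
  exact sqrt_dot_add_le _ _

private lemma wnorm_neg {k : ℕ} (A : Matrix (Fin k) (Fin k) ℝ) (x : Fin k → ℝ) :
    wnorm A (-x) = wnorm A x := by
  simp [wnorm, mulVec_neg, dotProduct_neg, neg_dotProduct]

set_option maxHeartbeats 1000000 in
/-- residual-component error decomposition, estimated subspace.
With `Π₂ = U₂U₂ᵀ`, `Π̂₂ = Û₂Û₂ᵀ`, `δ = Π₂ δ`, `r_τ = φ_τᵀ(β + δ) + ε_τ`,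
`S = λ I_k + ∑ Û₂ᵀ φ_τ φ_τᵀ Û₂` and
`δ̂ = Û₂ S⁻¹ ∑ Û₂ᵀ φ_τ (r_τ − φ_τᵀ β̂)`, one has the four-term decomposition of
`‖δ̂ − Π̂₂ δ‖` in the regularized Gram norm. -/
theorem stmt17 {p k n : ℕ} (hp : 1 ≤ p) (hk1 : 1 ≤ k) (hkp : k < p)
    (lam : ℝ) (hlam : 0 < lam)
    (U₂ Uhat₂ : Matrix (Fin p) (Fin k) ℝ)
    (hU₂ : U₂ᵀ * U₂ = 1) (hUhat₂ : Uhat₂ᵀ * Uhat₂ = 1)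
    (φ : Fin n → Fin p → ℝ) (ε : Fin n → ℝ) (β βhat : Fin p → ℝ)
    (δ : Fin p → ℝ) (hδ : δ = (U₂ * U₂ᵀ).mulVec δ)
    (r : Fin n → ℝ) (hr : ∀ τ, r τ = φ τ ⬝ᵥ (β + δ) + ε τ)
    (S : Matrix (Fin k) (Fin k) ℝ)
    (hS : S = lam • (1 : Matrix (Fin k) (Fin k) ℝ)
        + ∑ τ, vecMulVec (Uhat₂ᵀ.mulVec (φ τ)) (Uhat₂ᵀ.mulVec (φ τ)))
    (δhat : Fin p → ℝ)
    (hδhat : δhat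
        = Uhat₂.mulVec (S⁻¹.mulVec (∑ τ, (r τ - φ τ ⬝ᵥ βhat) • Uhat₂ᵀ.mulVec (φ τ)))) :
    wnorm (lam • (1 : Matrix (Fin p) (Fin p) ℝ) + ∑ τ, vecMulVec (φ τ) (φ τ))
        (δhat - (Uhat₂ * Uhat₂ᵀ).mulVec δ)
      ≤ wnorm S⁻¹
          (∑ τ, (φ τ ⬝ᵥ ((U₂ * U₂ᵀ - Uhat₂ * Uhat₂ᵀ).mulVec δ)) • Uhat₂ᵀ.mulVec (φ τ))
        + wnorm S⁻¹ (∑ τ, (φ τ ⬝ᵥ (β - βhat)) • Uhat₂ᵀ.mulVec (φ τ))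
        + wnorm S⁻¹ (∑ τ, ε τ • Uhat₂ᵀ.mulVec (φ τ))
        + Real.sqrt lam * Real.sqrt (δ ⬝ᵥ δ) := by
  classical
  set ψ : Fin n → Fin k → ℝ := fun τ => Uhat₂ᵀ.mulVec (φ τ) with hψ
  set w : Fin k → ℝ := Uhat₂ᵀ.mulVec δ with hw
  set v₁ : Fin k → ℝ :=
    ∑ τ, (φ τ ⬝ᵥ ((U₂ * U₂ᵀ - Uhat₂ * Uhat₂ᵀ).mulVec δ)) • ψ τ with hv₁
  set v₂ : Fin k → ℝ := ∑ τ, (φ τ ⬝ᵥ (β - βhat)) • ψ τ with hv₂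
  set v₃ : Fin k → ℝ := ∑ τ, ε τ • ψ τ with hv₃
  -- quadratic form of S
  have hSq : ∀ x y : Fin k → ℝ,
      x ⬝ᵥ S.mulVec y = lam * (x ⬝ᵥ y) + ∑ τ, (x ⬝ᵥ ψ τ) * (ψ τ ⬝ᵥ y) := by
    intro x y; rw [hS]; exact quad_form lam ψ x y
  -- S is positive definite
  have hSsym : Sᵀ = S := by
    rw [hS, transpose_add, transpose_smul, transpose_one, transpose_sum]
    congr 1
    refine Finset.sum_congr rfl fun τ _ => ?_
    ext i j
    simp [vecMulVec_apply, transpose_apply, mul_comm]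
  have hSpd : S.PosDef := by
    refine Matrix.PosDef.of_dotProduct_mulVec_pos ?_ ?_
    · ext i j
      rw [conjTranspose_apply]
      simpa using congrFun (congrFun hSsym i) j
    · intro x hx
      have hx2 : 0 < x ⬝ᵥ x := by
        rcases (dot_self_nonneg' x).lt_or_eq with h | h
        · exact h
        · exact absurd (dotProduct_self_eq_zero.mp h.symm) hx
      have := hSq x x
      have hsum : 0 ≤ ∑ τ, (x ⬝ᵥ ψ τ) * (ψ τ ⬝ᵥ x) := by
        refine Finset.sum_nonneg fun τ _ => ?_
        rw [dotProduct_comm (ψ τ) x]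
        exact mul_self_nonneg _
      simp only [star_trivial]
      rw [this]
      nlinarith
  have hdet : IsUnit S.det := hSpd.det_pos.ne'.isUnit
  have hSS : S * S⁻¹ = 1 := mul_nonsing_inv S hdet
  have hSS' : S⁻¹ * S = 1 := nonsing_inv_mul S hdet
  -- decomposition of the data vector
  have hproj : ∀ x y : Fin p → ℝ,
      Uhat₂ᵀ.mulVec x ⬝ᵥ Uhat₂ᵀ.mulVec y = x ⬝ᵥ (Uhat₂ * Uhat₂ᵀ).mulVec y := by
    intro x y
    have l1 : Uhat₂ᵀ.mulVec x ⬝ᵥ Uhat₂ᵀ.mulVec y = (Uhat₂ * Uhat₂ᵀ).mulVec x ⬝ᵥ y := by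
      rw [dot_mulVec_left, transpose_transpose, mulVec_mulVec]
    have l2 : x ⬝ᵥ (Uhat₂ * Uhat₂ᵀ).mulVec y = (Uhat₂ * Uhat₂ᵀ).mulVec x ⬝ᵥ y := by
      rw [dot_mulVec_left, transpose_mul, transpose_transpose]
    rw [l1, l2]
  have hv : (∑ τ, (r τ - φ τ ⬝ᵥ βhat) • ψ τ)
      = v₁ + v₂ + v₃ + (S - lam • (1 : Matrix (Fin k) (Fin k) ℝ)).mulVec w := by
    have hSd : S - lam • (1 : Matrix (Fin k) (Fin k) ℝ) = ∑ τ, vecMulVec (ψ τ) (ψ τ) := by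
      rw [hS]; abel
    rw [hSd, sum_mulVec', hv₁, hv₂, hv₃, ← Finset.sum_add_distrib, ← Finset.sum_add_distrib,
      ← Finset.sum_add_distrib]
    refine Finset.sum_congr rfl fun τ _ => ?_
    rw [vecMulVec_mulVec']
    have hψw : ψ τ ⬝ᵥ w = φ τ ⬝ᵥ (Uhat₂ * Uhat₂ᵀ).mulVec δ := hproj (φ τ) δ
    have e1 : r τ = φ τ ⬝ᵥ β + φ τ ⬝ᵥ δ + ε τ := by rw [hr τ, dotProduct_add]
    have e2 : φ τ ⬝ᵥ (β - βhat) = φ τ ⬝ᵥ β - φ τ ⬝ᵥ βhat := dotProduct_sub _ _ _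
    have e3 : φ τ ⬝ᵥ ((U₂ * U₂ᵀ - Uhat₂ * Uhat₂ᵀ).mulVec δ)
        = φ τ ⬝ᵥ δ - φ τ ⬝ᵥ (Uhat₂ * Uhat₂ᵀ).mulVec δ := by
      rw [sub_mulVec, dotProduct_sub, ← hδ]
    have : r τ - φ τ ⬝ᵥ βhat
        = (φ τ ⬝ᵥ ((U₂ * U₂ᵀ - Uhat₂ * Uhat₂ᵀ).mulVec δ)) + (φ τ ⬝ᵥ (β - βhat))
          + ε τ + ψ τ ⬝ᵥ w := by
      rw [hψw]
      linarith [e1, e2, e3]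
    rw [this]
    simp only [add_smul]
  -- the error vector
  set a : Fin k → ℝ := S⁻¹.mulVec v₁ + S⁻¹.mulVec v₂ + S⁻¹.mulVec v₃
      - lam • S⁻¹.mulVec w with ha
  have hB : δhat - (Uhat₂ * Uhat₂ᵀ).mulVec δ = Uhat₂.mulVec a := by
    rw [hδhat, hv, ← mulVec_mulVec, ← hw, ← mulVec_sub]
    congr 1
    have h1 : S⁻¹.mulVec ((S - lam • (1 : Matrix (Fin k) (Fin k) ℝ)).mulVec w)
        = w - lam • S⁻¹.mulVec w := by
      rw [mulVec_mulVec, Matrix.mul_sub, hSS', Matrix.mul_smul, Matrix.mul_one,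
        sub_mulVec, one_mulVec, smul_mulVec]
    rw [mulVec_add, mulVec_add, mulVec_add, h1, ha]
    abel
  -- weighted norm identity: ‖Û a‖_G = ‖a‖_S
  have hGnorm : wnorm (lam • (1 : Matrix (Fin p) (Fin p) ℝ) + ∑ τ, vecMulVec (φ τ) (φ τ))
      (Uhat₂.mulVec a) = Real.sqrt (a ⬝ᵥ S.mulVec a) := by
    unfold wnorm
    congr 1
    rw [quad_form, hSq, dot_iso Uhat₂ hUhat₂]
    congr 1
    refine Finset.sum_congr rfl fun τ _ => ?_
    rw [dotProduct_comm (Uhat₂.mulVec a) (φ τ), dot_mulVec_left,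
      dotProduct_comm a (ψ τ)]
  -- ‖S⁻¹ v‖_S = ‖v‖_{S⁻¹}
  have hflip : ∀ v : Fin k → ℝ, wnorm S (S⁻¹.mulVec v) = wnorm S⁻¹ v := by
    intro v
    unfold wnorm
    congr 1
    rw [mulVec_mulVec, hSS, one_mulVec, dotProduct_comm]
  -- triangle inequality
  have hPSD : S.PosSemidef := hSpd.posSemidef
  have htri : wnorm S a ≤ wnorm S (S⁻¹.mulVec v₁) + wnorm S (S⁻¹.mulVec v₂)
      + wnorm S (S⁻¹.mulVec v₃) + wnorm S (lam • S⁻¹.mulVec w) := by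
    rw [ha, sub_eq_add_neg]
    calc wnorm S (S⁻¹.mulVec v₁ + S⁻¹.mulVec v₂ + S⁻¹.mulVec v₃ + -(lam • S⁻¹.mulVec w))
        ≤ wnorm S (S⁻¹.mulVec v₁ + S⁻¹.mulVec v₂ + S⁻¹.mulVec v₃)
          + wnorm S (-(lam • S⁻¹.mulVec w)) := wnorm_triangle hPSD _ _
      _ ≤ wnorm S (S⁻¹.mulVec v₁ + S⁻¹.mulVec v₂) + wnorm S (S⁻¹.mulVec v₃)
          + wnorm S (-(lam • S⁻¹.mulVec w)) := by
            gcongr ?_ + _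
            exact wnorm_triangle hPSD _ _
      _ ≤ wnorm S (S⁻¹.mulVec v₁) + wnorm S (S⁻¹.mulVec v₂) + wnorm S (S⁻¹.mulVec v₃)
          + wnorm S (-(lam • S⁻¹.mulVec w)) := by
            gcongr ?_ + _ + _
            exact wnorm_triangle hPSD _ _
      _ = _ := by rw [wnorm_neg]
  -- last term bound
  have hlast : wnorm S (lam • S⁻¹.mulVec w) ≤ Real.sqrt lam * Real.sqrt (δ ⬝ᵥ δ) := by
    set z : Fin k → ℝ := S⁻¹.mulVec w with hz
    set t : ℝ := w ⬝ᵥ S⁻¹.mulVec w with hT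
    have hSz : S.mulVec z = w := by rw [hz, mulVec_mulVec, hSS, one_mulVec]
    have hzSz : z ⬝ᵥ S.mulVec z = t := by
      rw [hSz, dotProduct_comm, hT]
    have ht0 : 0 ≤ t := by
      rw [← hzSz, hSq]
      have hsum : 0 ≤ ∑ τ, (z ⬝ᵥ ψ τ) * (ψ τ ⬝ᵥ z) := by
        refine Finset.sum_nonneg fun τ _ => ?_
        rw [dotProduct_comm (ψ τ) z]; exact mul_self_nonneg _
      nlinarith [dot_self_nonneg' z, hlam.le]
    have hzz : lam * (z ⬝ᵥ z) ≤ t := by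
      rw [← hzSz, hSq]
      have hsum : 0 ≤ ∑ τ, (z ⬝ᵥ ψ τ) * (ψ τ ⬝ᵥ z) := by
        refine Finset.sum_nonneg fun τ _ => ?_
        rw [dotProduct_comm (ψ τ) z]; exact mul_self_nonneg _
      linarith
    have hcs : t ≤ Real.sqrt (w ⬝ᵥ w) * Real.sqrt (z ⬝ᵥ z) := by
      rw [hT, hz]; exact dot_cauchy w (S⁻¹.mulVec w)
    have hww : w ⬝ᵥ w ≤ δ ⬝ᵥ δ := by
      have hd := dot_self_nonneg' (δ - Uhat₂.mulVec w)
      have h1 : δ ⬝ᵥ Uhat₂.mulVec w = w ⬝ᵥ w := by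
        rw [dot_mulVec_left, ← hw]
      have h2 : Uhat₂.mulVec w ⬝ᵥ δ = w ⬝ᵥ w := by
        rw [dotProduct_comm]; exact h1
      have h3 : Uhat₂.mulVec w ⬝ᵥ Uhat₂.mulVec w = w ⬝ᵥ w := dot_iso Uhat₂ hUhat₂ w w
      rw [sub_dotProduct, dotProduct_sub, dotProduct_sub, h1, h2, h3] at hd
      linarith
    -- key scalar inequality: lam * t ≤ w ⬝ᵥ w
    have hkey : lam * t ≤ w ⬝ᵥ w := by
      set aa := Real.sqrt (w ⬝ᵥ w) with haa
      set bb := Real.sqrt (z ⬝ᵥ z) with hbb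
      have haa2 : aa ^ 2 = w ⬝ᵥ w := Real.sq_sqrt (dot_self_nonneg' w)
      have hbb2 : bb ^ 2 = z ⬝ᵥ z := Real.sq_sqrt (dot_self_nonneg' z)
      have haa0 : 0 ≤ aa := Real.sqrt_nonneg _
      have hbb0 : 0 ≤ bb := Real.sqrt_nonneg _
      rcases eq_or_lt_of_le ht0 with h | h
      · rw [← h, mul_zero, ← haa2]; positivity
      · have h1 : t * t ≤ (aa * bb) * (aa * bb) :=
          mul_le_mul hcs hcs ht0 (mul_nonneg haa0 hbb0)
        have h2 : lam * (bb ^ 2) ≤ t := by rw [hbb2]; exact hzz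
        have h3 : lam * (t * t) ≤ t * (aa * aa) := by
          calc lam * (t * t) ≤ lam * ((aa * bb) * (aa * bb)) :=
                mul_le_mul_of_nonneg_left h1 hlam.le
            _ = (lam * bb ^ 2) * (aa * aa) := by ring
            _ ≤ t * (aa * aa) := mul_le_mul_of_nonneg_right h2 (mul_self_nonneg aa)
        have haa2' : aa * aa = w ⬝ᵥ w := by rw [← haa2]; ring
        rw [← haa2']
        nlinarith [h3, h]
    -- compute the norm
    have hnorm : wnorm S (lam • S⁻¹.mulVec w) = Real.sqrt (lam ^ 2 * t) := by
      unfold wnorm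
      congr 1
      rw [mulVec_smul, dotProduct_smul, smul_dotProduct, ← hz, hzSz]
      simp [smul_eq_mul]; ring
    rw [hnorm]
    have : lam ^ 2 * t ≤ lam * (δ ⬝ᵥ δ) := by nlinarith [hww, hkey, hlam]
    calc Real.sqrt (lam ^ 2 * t) ≤ Real.sqrt (lam * (δ ⬝ᵥ δ)) := Real.sqrt_le_sqrt this
      _ = Real.sqrt lam * Real.sqrt (δ ⬝ᵥ δ) := Real.sqrt_mul hlam.le _
  -- assemble
  rw [hB, hGnorm]
  have : Real.sqrt (a ⬝ᵥ S.mulVec a) = wnorm S a := rfl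
  rw [this]
  calc wnorm S a ≤ wnorm S (S⁻¹.mulVec v₁) + wnorm S (S⁻¹.mulVec v₂)
        + wnorm S (S⁻¹.mulVec v₃) + wnorm S (lam • S⁻¹.mulVec w) := htri
    _ ≤ wnorm S⁻¹ v₁ + wnorm S⁻¹ v₂ + wnorm S⁻¹ v₃ + Real.sqrt lam * Real.sqrt (δ ⬝ᵥ δ) := by
        rw [hflip, hflip, hflip]
        gcongr
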